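/- arXiv:1510.03966 — 2 statements merged into one kernel-verified Lean document; each statement's English description precedes it below -/
import Mathlib

section
/- Let v(z) = a0 · z · (z - u1)^n · (z - conj(u1))^n with a0 > 0, n ≥ 1, Im(u1) > 0, and let τ = -2πi · Res(1/v, u1). Then Im(τ) = π / v'(0) = π / (a0 |u1|^{2n}). -/
open Polynomial in
theorem pf_exists (n : ℕ) (hn : 1 ≤ n) (u : ℂ) (hu0 : u ≠ 0) (hne : u ≠ starRingEnd ℂ u) :
    ∃ P1 : ℂ[X], P1.natDegree < n ∧
      ((1:ℂ[X]) = C (((u * starRingEnd ℂ u) ^ n)⁻¹)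
          * ((X - C u)^n * (X - C (starRingEnd ℂ u))^n)
        + P1 * (X * (X - C (starRingEnd ℂ u))^n)
        + (Polynomial.map (starRingEnd ℂ) P1) * (X * (X - C u)^n)) := by
  set cc := starRingEnd ℂ
  set w := cc u with hw
  set Q1 : ℂ[X] := (X - C u)^n with hQ1
  set Q2 : ℂ[X] := (X - C w)^n with hQ2
  set P0 : ℂ := ((u * w) ^ n)⁻¹ with hP0
  have hM : u * w ≠ 0 := mul_ne_zero hu0 (by simpa [hw, cc] using hu0)
  have hP0ne : P0 ≠ 0 := inv_ne_zero (pow_ne_zero n hM)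
  -- X divides 1 - C P0 * (Q1 * Q2)
  have hdvd : X ∣ (1 - C P0 * (Q1 * Q2)) := by
    rw [Polynomial.X_dvd_iff]
    have h1 : (-u)^n * (-w)^n = (u*w)^n := by rw [← mul_pow, neg_mul_neg]
    simp [Polynomial.coeff_zero_eq_eval_zero, hQ1, hQ2, h1, hP0,
      inv_mul_cancel₀ (pow_ne_zero n hM)]
  obtain ⟨W, hW⟩ := hdvd
  -- coprimality
  have hcop : IsCoprime Q1 Q2 := by
    have : IsCoprime (X - C u) (X - C w) :=
      Polynomial.isCoprime_X_sub_C_of_isUnit_sub (by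
        simpa [sub_ne_zero] using hne)
    exact this.pow
  obtain ⟨a, b, hab⟩ := hcop
  have hmonic : Q1.Monic := (monic_X_sub_C u).pow n
  have hmonic2 : Q2.Monic := (monic_X_sub_C w).pow n
  have hQ1nd : Q1.natDegree = n := by
    simp [hQ1, Polynomial.natDegree_pow, Polynomial.natDegree_X_sub_C]
  have hQ2nd : Q2.natDegree = n := by
    simp [hQ2, Polynomial.natDegree_pow, Polynomial.natDegree_X_sub_C]
  set P1r : ℂ[X] := (W * b) %ₘ Q1 with hP1r
  have hmod : W * b %ₘ Q1 + Q1 * (W * b /ₘ Q1) = W * b := Polynomial.modByMonic_add_div _ Q1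
  set P2r : ℂ[X] := W * a + (W * b /ₘ Q1) * Q2 with hP2r
  have hWsplit : W = P1r * Q2 + P2r * Q1 := by
    linear_combination (-(W : ℂ[X])) * hab - Q2 * hmod
  have hE : (1:ℂ[X]) = C P0 * (Q1 * Q2) + P1r * (X * Q2) + P2r * (X * Q1) := by
    linear_combination hW + X * hWsplit
  -- degree bounds
  have hP1rnd : P1r.natDegree ≤ n - 1 := by
    by_cases h0 : P1r = 0
    · simp [h0]
    · have hd := Polynomial.degree_modByMonic_lt (W * b) hmonic
      rw [← hP1r] at hd
      have : P1r.degree < (n : WithBot ℕ) := by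
        rwa [Polynomial.degree_eq_natDegree hmonic.ne_zero, hQ1nd] at hd
      have := (Polynomial.natDegree_lt_iff_degree_lt h0).2 this
      omega
  have hW0 : W ≠ 0 := by
    intro h
    rw [h, mul_zero, sub_eq_zero] at hW
    have h1 : (1:ℂ[X]).natDegree = (C P0 * (Q1 * Q2)).natDegree := by rw [hW]
    rw [Polynomial.natDegree_one, Polynomial.natDegree_C_mul hP0ne,
      Polynomial.natDegree_mul hmonic.ne_zero hmonic2.ne_zero, hQ1nd, hQ2nd] at h1
    omega
  have hXWnd : (X * W).natDegree ≤ 2 * n := by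
    rw [← hW]
    refine le_trans (Polynomial.natDegree_sub_le _ _) ?_
    have h2 : (C P0 * (Q1 * Q2)).natDegree ≤ 2 * n := by
      refine le_trans (Polynomial.natDegree_mul_le) ?_
      rw [Polynomial.natDegree_mul hmonic.ne_zero hmonic2.ne_zero, hQ1nd, hQ2nd]
      simp [Polynomial.natDegree_C]; omega
    simp [Polynomial.natDegree_one]; omega
  have hWnd : W.natDegree ≤ 2 * n - 1 := by
    rw [Polynomial.natDegree_mul Polynomial.X_ne_zero hW0, Polynomial.natDegree_X] at hXWnd
    omega
  have hP2rnd : P2r.natDegree ≤ n - 1 := by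
    by_cases h0 : P2r = 0
    · simp [h0]
    · have hPQ : P2r * Q1 = W - P1r * Q2 := (sub_eq_of_eq_add' hWsplit).symm
      have h3 : (P2r * Q1).natDegree ≤ 2 * n - 1 := by
        rw [hPQ]
        refine le_trans (Polynomial.natDegree_sub_le _ _) ?_
        have h4 : (P1r * Q2).natDegree ≤ (n - 1) + n :=
          le_trans Polynomial.natDegree_mul_le (by rw [hQ2nd]; omega)
        simp only [max_le_iff]
        omega
      rw [Polynomial.natDegree_mul h0 hmonic.ne_zero, hQ1nd] at h3
      omega
  -- conjugation facts
  have hccid : ∀ p : ℂ[X], Polynomial.map cc (Polynomial.map cc p) = p := by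
    intro p; ext k; simp [Polynomial.coeff_map, cc]
  have hmapQ1 : Polynomial.map cc Q1 = Q2 := by
    simp [hQ1, hQ2, Polynomial.map_pow, Polynomial.map_sub, hw]
  have hmapQ2 : Polynomial.map cc Q2 = Q1 := by
    simp [hQ1, hQ2, Polynomial.map_pow, Polynomial.map_sub, hw, cc]
  have hccP0 : cc P0 = P0 := by
    simp [hP0, hw, cc, map_inv₀, map_pow, mul_comm]
  have hE' : (1:ℂ[X]) = C P0 * (Q1 * Q2) + (Polynomial.map cc P2r) * (X * Q2)
      + (Polynomial.map cc P1r) * (X * Q1) := by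
    have := congrArg (Polynomial.map cc) hE
    simp only [Polynomial.map_add, Polynomial.map_mul, Polynomial.map_one, Polynomial.map_pow,
      Polynomial.map_X, Polynomial.map_C, hmapQ1, hmapQ2, hccP0] at this
    linear_combination this
  have hcchalf : cc (2⁻¹:ℂ) = 2⁻¹ := by
    rw [show (2⁻¹:ℂ) = ((2⁻¹:ℝ):ℂ) by norm_num]
    exact Complex.conj_ofReal _
  refine ⟨C (2⁻¹:ℂ) * (P1r + Polynomial.map cc P2r), ?_, ?_⟩
  · -- natDegree bound
    have h5 : (P1r + Polynomial.map cc P2r).natDegree ≤ n - 1 := by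
      refine le_trans (Polynomial.natDegree_add_le _ _) ?_
      have := le_trans (Polynomial.natDegree_map_le (f := cc) (p := P2r)) hP2rnd
      omega
    have h6 := Polynomial.natDegree_mul_le
      (p := C (2⁻¹:ℂ)) (q := P1r + Polynomial.map cc P2r)
    rw [Polynomial.natDegree_C] at h6
    omega
  · have h2 : (C (2⁻¹:ℂ)) * 2 = (1 : ℂ[X]) := by
      rw [← map_ofNat (Polynomial.C : ℂ →+* ℂ[X]) 2, ← Polynomial.C_mul]
      norm_num
    have hmapsym : Polynomial.map cc (C (2⁻¹:ℂ) * (P1r + Polynomial.map cc P2r))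
        = C (2⁻¹:ℂ) * (Polynomial.map cc P1r + P2r) := by
      simp only [Polynomial.map_mul, Polynomial.map_add, Polynomial.map_C, hccid, hcchalf]
    rw [hmapsym]
    linear_combination C (2⁻¹:ℂ) * hE + C (2⁻¹:ℂ) * hE'
      + (C P0 * (Q1 * Q2) - 1) * h2

theorem circleIntegral_add' {f g : ℂ → ℂ} {c : ℂ} {R : ℝ} (hf : CircleIntegrable f c R)
    (hg : CircleIntegrable g c R) :
    (∮ z in C(c, R), (f z + g z)) = (∮ z in C(c, R), f z) + ∮ z in C(c, R), g z := by
  simp only [circleIntegral, smul_add, intervalIntegral.integral_add hf.out hg.out]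

theorem CircleIntegrable.finsetSum {ι : Type*} (s : Finset ι) {f : ι → ℂ → ℂ} {c : ℂ} {R : ℝ}
    (h : ∀ i ∈ s, CircleIntegrable (f i) c R) :
    CircleIntegrable (fun z => ∑ i ∈ s, f i z) c R := by
  classical
  induction s using Finset.induction with
  | empty => simpa using circleIntegrable_const (0:ℂ) c R
  | @insert a s ha ih =>
    simp only [Finset.sum_insert ha]
    exact (h a (Finset.mem_insert_self _ _)).add
      (ih fun i hi => h i (Finset.mem_insert_of_mem hi))

theorem circleIntegral_finset_sum {ι : Type*} (s : Finset ι) (f : ι → ℂ → ℂ) (c : ℂ) (R : ℝ)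
    (h : ∀ i ∈ s, CircleIntegrable (f i) c R) :
    (∮ z in C(c, R), ∑ i ∈ s, f i z) = ∑ i ∈ s, ∮ z in C(c, R), f i z := by
  simp only [circleIntegral, smul_eq_mul, Finset.mul_sum]
  rw [intervalIntegral.integral_finset_sum]
  intro i hi
  exact ((h i hi).out : _)

open Real in
theorem im_tau_eq (a0 : ℝ) (ha0 : 0 < a0) (n : ℕ) (hn : 1 ≤ n)
    (u1 : ℂ) (hIm : 0 < u1.im)
    (v : ℂ → ℂ)
    (hv : ∀ z : ℂ, v z = (a0 : ℂ) * z * (z - u1) ^ n * (z - (starRingEnd ℂ) u1) ^ n)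
    (ε : ℝ) (hε : 0 < ε) (hε' : ε < u1.im)
    (τ : ℂ)
    (hτ : τ = -(2 * π * Complex.I)
        * ((2 * π * Complex.I)⁻¹ * (∮ z in C(u1, ε), (v z)⁻¹))) :
    τ.im = π / (a0 * ‖u1‖ ^ (2 * n)) := by
  have habs : u1.im ≤ ‖u1‖ := le_trans (le_abs_self _) (Complex.abs_im_le_norm u1)
  have hu0 : u1 ≠ 0 := by
    intro h; rw [h] at hIm; simp at hIm
  have hne : u1 ≠ starRingEnd ℂ u1 := by
    intro h
    have := congrArg Complex.im h
    rw [Complex.conj_im] at this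
    linarith
  obtain ⟨P1, hdeg, hid⟩ := pf_exists n hn u1 hu0 hne
  set cc := starRingEnd ℂ with hcc
  set w : ℂ := cc u1 with hwdef
  set P0 : ℂ := ((u1 * w) ^ n)⁻¹ with hP0def
  set b : ℂ := P1.coeff (n - 1) with hbdef
  have hdeg' : P1.natDegree ≤ n - 1 := by omega
  -- distance facts
  have hwu : 2 * u1.im ≤ ‖w - u1‖ := by
    have h1 : (w - u1).im = -u1.im - u1.im := by
      rw [Complex.sub_im, hwdef, Complex.conj_im]
    have h2 := Complex.abs_im_le_norm (w - u1)
    rw [h1] at h2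
    rw [abs_of_nonpos (by linarith)] at h2
    linarith
  have hz0 : ∀ z ∈ Metric.closedBall u1 ε, z ≠ 0 := by
    intro z hz h0
    rw [Metric.mem_closedBall, dist_eq_norm, h0, zero_sub, norm_neg] at hz
    linarith
  have hzw : ∀ z ∈ Metric.closedBall u1 ε, z ≠ w := by
    intro z hz h0
    rw [Metric.mem_closedBall, h0, dist_eq_norm] at hz
    linarith
  -- Step A : P0 + b + conj b = 0
  have hsum0 : P0 + b + cc b = 0 := by
    have hXQ2m : (Polynomial.X * (Polynomial.X - Polynomial.C w)^n : Polynomial ℂ).Monic :=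
      Polynomial.monic_X.mul ((Polynomial.monic_X_sub_C w).pow n)
    have hXQ1m : (Polynomial.X * (Polynomial.X - Polynomial.C u1)^n : Polynomial ℂ).Monic :=
      Polynomial.monic_X.mul ((Polynomial.monic_X_sub_C u1).pow n)
    have hndXQ2 : (Polynomial.X * (Polynomial.X - Polynomial.C w)^n : Polynomial ℂ).natDegree
        = n + 1 := by
      rw [Polynomial.natDegree_mul Polynomial.X_ne_zero
        (pow_ne_zero n (Polynomial.X_sub_C_ne_zero w)), Polynomial.natDegree_X,
        Polynomial.natDegree_pow, Polynomial.natDegree_X_sub_C]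
      omega
    have hndXQ1 : (Polynomial.X * (Polynomial.X - Polynomial.C u1)^n : Polynomial ℂ).natDegree
        = n + 1 := by
      rw [Polynomial.natDegree_mul Polynomial.X_ne_zero
        (pow_ne_zero n (Polynomial.X_sub_C_ne_zero u1)), Polynomial.natDegree_X,
        Polynomial.natDegree_pow, Polynomial.natDegree_X_sub_C]
      omega
    have e1 : (Polynomial.C P0 * ((Polynomial.X - Polynomial.C u1)^n
        * (Polynomial.X - Polynomial.C w)^n)).coeff (2*n) = P0 := by
      rw [Polynomial.coeff_C_mul, ← mul_pow]
      have hm : (((Polynomial.X - Polynomial.C u1) * (Polynomial.X - Polynomial.C w))^n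
          : Polynomial ℂ).Monic :=
        ((Polynomial.monic_X_sub_C _).mul (Polynomial.monic_X_sub_C _)).pow n
      have hnd : (((Polynomial.X - Polynomial.C u1) * (Polynomial.X - Polynomial.C w))^n
          : Polynomial ℂ).natDegree = 2*n := by
        rw [Polynomial.natDegree_pow, Polynomial.natDegree_mul (Polynomial.X_sub_C_ne_zero _)
          (Polynomial.X_sub_C_ne_zero _), Polynomial.natDegree_X_sub_C,
          Polynomial.natDegree_X_sub_C]
        omega
      rw [← hnd, hm.coeff_natDegree, mul_one]
    have h2n : 2*n = (n-1) + (n+1) := by omega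
    have e2 : (P1 * (Polynomial.X * (Polynomial.X - Polynomial.C w)^n)).coeff (2*n) = b := by
      rw [h2n, Polynomial.coeff_mul_add_eq_of_natDegree_le hdeg' (le_of_eq hndXQ2),
        ← hndXQ2, hXQ2m.coeff_natDegree, mul_one]
    have e3 : ((Polynomial.map cc P1) * (Polynomial.X
        * (Polynomial.X - Polynomial.C u1)^n)).coeff (2*n) = cc b := by
      rw [h2n, Polynomial.coeff_mul_add_eq_of_natDegree_le
        (le_trans (Polynomial.natDegree_map_le) hdeg') (le_of_eq hndXQ1),
        ← hndXQ1, hXQ1m.coeff_natDegree, mul_one, Polynomial.coeff_map]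
    have h := congrArg (fun p : Polynomial ℂ => p.coeff (2*n)) hid
    simp only [Polynomial.coeff_add] at h
    rw [e1, e2, e3, Polynomial.coeff_one, if_neg (by omega : ¬ 2*n = 0)] at h
    exact h.symm
  -- Step B : the circle integral
  have ha0c : (a0:ℂ) ≠ 0 := Complex.ofReal_ne_zero.2 ha0.ne'
  have hI : (∮ z in C(u1, ε), (v z)⁻¹) = ((a0:ℂ)⁻¹ * b) * (2 * π * Complex.I) := by
    set cj : ℕ → ℂ := fun j => (Polynomial.taylor u1 P1).coeff j with hcj
    set g : ℂ → ℂ := fun z =>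
      (a0:ℂ)⁻¹ * (P0 * z⁻¹ + (Polynomial.map cc P1).eval z * ((z - w)^n)⁻¹) with hg
    -- pointwise identity on the sphere
    have heq : Set.EqOn (fun z => (v z)⁻¹)
        (fun z => g z + ∑ j ∈ Finset.range n, ((a0:ℂ)⁻¹ * cj j) * (z - u1)^((j:ℤ) - n))
        (Metric.sphere u1 ε) := by
      intro z hz
      have hzball : z ∈ Metric.closedBall u1 ε := Metric.sphere_subset_closedBall hz
      have hz0' : z ≠ 0 := hz0 z hzball
      have hzw' : z ≠ w := hzw z hzball
      have hzu : z ≠ u1 := by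
        intro h; rw [Metric.mem_sphere, h, dist_self] at hz; exact hε.ne hz
      have hzu' : z - u1 ≠ 0 := sub_ne_zero.2 hzu
      have hzw'' : z - w ≠ 0 := sub_ne_zero.2 hzw'
      have hEz := congrArg (Polynomial.eval z) hid
      simp only [Polynomial.eval_add, Polynomial.eval_mul, Polynomial.eval_one,
        Polynomial.eval_C, Polynomial.eval_X, Polynomial.eval_pow, Polynomial.eval_sub] at hEz
      have hsumeq : ∑ j ∈ Finset.range n, ((a0:ℂ)⁻¹ * cj j) * (z - u1)^((j:ℤ) - n)
          = (a0:ℂ)⁻¹ * (P1.eval z * ((z - u1)^n)⁻¹) := by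
        have hP1z : P1.eval z = ∑ j ∈ Finset.range n, cj j * (z - u1)^j := by
          rw [← Polynomial.taylor_eval_sub u1 P1 z]
          exact Polynomial.eval_eq_sum_range' (by rw [Polynomial.natDegree_taylor]; omega) _
        rw [hP1z, Finset.sum_mul, Finset.mul_sum]
        refine Finset.sum_congr rfl fun j hj => ?_
        rw [zpow_sub₀ hzu', zpow_natCast, zpow_natCast]
        field_simp
      show (v z)⁻¹ = g z + _
      rw [hsumeq, hv z, hg]
      have hpu : ((z - u1)^n : ℂ) ≠ 0 := pow_ne_zero _ hzu'
      have hpw : ((z - w)^n : ℂ) ≠ 0 := pow_ne_zero _ hzw''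
      clear_value P0
      field_simp
      linear_combination hEz
    -- integrability
    have hint : ∀ j ∈ Finset.range n,
        CircleIntegrable (fun z => ((a0:ℂ)⁻¹ * cj j) * (z - u1)^((j:ℤ) - n)) u1 ε := by
      intro j _
      have h1 : CircleIntegrable (fun z => (z - u1)^((j:ℤ) - n)) u1 ε := by
        rw [circleIntegrable_sub_zpow_iff]
        right; right
        simp [abs_of_pos hε, hε.ne]
      exact IntervalIntegrable.const_mul h1 _
    have hgdiff : ∀ z ∈ Metric.closedBall u1 ε, DifferentiableAt ℂ g z := by
      intro z hzball
      have hz0' : z ≠ 0 := hz0 z hzball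
      have hzw'' : z - w ≠ 0 := sub_ne_zero.2 (hzw z hzball)
      apply DifferentiableAt.const_mul
      apply DifferentiableAt.add
      · exact (differentiableAt_inv hz0').const_mul _
      · exact (Polynomial.differentiableAt _).mul
          (((differentiableAt_id.sub (differentiableAt_const _)).pow n).inv
            (pow_ne_zero _ hzw''))
    have hgint : CircleIntegrable g u1 ε :=
      ContinuousOn.circleIntegrable hε.le fun z hz =>
        (hgdiff z (Metric.sphere_subset_closedBall hz)).continuousAt.continuousWithinAt
    have hg0 : (∮ z in C(u1, ε), g z) = 0 := by
      refine Complex.circleIntegral_eq_zero_of_differentiable_on_off_countable hε.le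
        Set.countable_empty
        (fun z hz => (hgdiff z hz).continuousAt.continuousWithinAt)
        (fun z hz => hgdiff z (Metric.ball_subset_closedBall hz.1))
    have hcb : cj (n-1) = b := by
      have hD : Polynomial.hasseDeriv (n-1) P1 = Polynomial.C b := by
        have h0 : (Polynomial.hasseDeriv (n-1) P1).natDegree ≤ 0 :=
          le_trans (Polynomial.natDegree_hasseDeriv_le _ _) (by omega)
        rw [Polynomial.eq_C_of_natDegree_le_zero h0]
        congr 1
        rw [Polynomial.hasseDeriv_coeff]
        simp [hbdef]
      simp only [hcj, Polynomial.taylor_coeff, hD, Polynomial.eval_C]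
    calc (∮ z in C(u1, ε), (v z)⁻¹)
        = ∮ z in C(u1, ε),
            (g z + ∑ j ∈ Finset.range n, ((a0:ℂ)⁻¹ * cj j) * (z - u1)^((j:ℤ) - n)) :=
          circleIntegral.integral_congr hε.le heq
      _ = (∮ z in C(u1, ε), g z) + ∮ z in C(u1, ε),
            (∑ j ∈ Finset.range n, ((a0:ℂ)⁻¹ * cj j) * (z - u1)^((j:ℤ) - n)) :=
          circleIntegral_add' hgint (CircleIntegrable.finsetSum _ hint)
      _ = ∑ j ∈ Finset.range n,
            ∮ z in C(u1, ε), ((a0:ℂ)⁻¹ * cj j) * (z - u1)^((j:ℤ) - n) := by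
          rw [hg0, zero_add, circleIntegral_finset_sum _ _ _ _ hint]
      _ = ((a0:ℂ)⁻¹ * b) * (2 * π * Complex.I) := by
          rw [Finset.sum_eq_single (n-1)]
          · rw [circleIntegral.integral_const_mul]
            have he : ((n-1:ℕ):ℤ) - n = -1 := by push_cast; omega
            simp only [he, zpow_neg_one, hcb]
            rw [circleIntegral.integral_sub_inv_of_mem_ball (Metric.mem_ball_self hε)]
          · intro j hj hjne
            have hje : ((j:ℕ):ℤ) - n ≠ -1 := by
              simp only [Finset.mem_range] at hj
              omega
            rw [circleIntegral.integral_const_mul,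
              circleIntegral.integral_sub_zpow_of_ne hje, mul_zero]
          · intro hmem
            exact absurd (Finset.mem_range.2 (by omega)) hmem
  -- Step C : conclusion
  have h2pi : (2 * (π:ℂ) * Complex.I) ≠ 0 := by
    simp [Real.pi_ne_zero, Complex.I_ne_zero, Complex.ofReal_ne_zero]
  have hτ' : τ = -(((a0:ℂ)⁻¹ * b) * (2 * π * Complex.I)) := by
    rw [hτ, hI, ← mul_assoc, neg_mul, mul_inv_cancel₀ h2pi]
    ring
  have hbre : b.re = -P0.re / 2 := by
    have := congrArg Complex.re hsum0
    simp only [Complex.add_re, Complex.zero_re, hcc, Complex.conj_re] at this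
    linarith
  have hP0re : P0.re = (‖u1‖ ^ (2 * n))⁻¹ := by
    have h1 : u1 * w = ((Complex.normSq u1 : ℝ) : ℂ) := Complex.mul_conj u1
    rw [hP0def, h1, ← Complex.ofReal_pow, ← Complex.ofReal_inv, Complex.ofReal_re,
      Complex.normSq_eq_norm_sq, ← pow_mul]
  rw [hτ']
  have : (((a0:ℂ)⁻¹ * b) * (2 * π * Complex.I)).im = a0⁻¹ * b.re * (2 * π) := by
    have ha : ((a0:ℂ))⁻¹ = ((a0⁻¹ : ℝ) : ℂ) := by rw [Complex.ofReal_inv]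
    rw [ha]
    simp [Complex.mul_im, Complex.mul_re, Complex.ofReal_re, Complex.ofReal_im]
  rw [Complex.neg_im, this, hbre, hP0re]
  have hA : ‖u1‖ ≠ 0 := by
    simpa using hu0
  have hAn : ‖u1‖ ^ (2 * n) ≠ 0 := pow_ne_zero _ hA
  field_simp
end

section
/- Let v(z) = a0 · z · (z - u1)^n · (z - conj(u1))^n with a0 > 0, n ≥ 1, Im(u1) > 0 and Re(u1) > 0, and let τ = -2πi · Res(1/v, u1). Then Re(τ) < 0. -/
open Finset

/-- Key polynomial identity: `(u-1) * S_{n+1}(u) = u^2 * S_n(u) + C(2n-1,n-1)*((u-1)^2-1)`. -/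
private lemma re_tau_aux_key (m : ℕ) (u : ℂ) :
    (u - 1) * (∑ k ∈ range (m+2), ((m+1+k).choose k : ℂ) * u ^ (m+2-k)) =
      u^2 * (∑ k ∈ range (m+1), ((m+k).choose k : ℂ) * u ^ (m+1-k))
      + ((2*m+1).choose m : ℂ) * ((u-1)^2 - 1) := by
  set X : ℂ := ∑ k ∈ range (m+1), ((m+1+k).choose k : ℂ) * u ^ (m+2-k) with hX
  set Y : ℂ := ∑ k ∈ range (m+1), ((m+1+k).choose (k+1) : ℂ) * u ^ (m+2-k) with hY
  set Y' : ℂ := ∑ k ∈ range m, ((m+1+k).choose (k+1) : ℂ) * u ^ (m+2-k) with hY'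
  have hT1 : u * (∑ k ∈ range (m+2), ((m+1+k).choose k : ℂ) * u ^ (m+2-k))
      = X + Y + u^(m+3) := by
    rw [Finset.mul_sum, Finset.sum_range_succ']
    have h0 : u * (((m+1+0).choose 0 : ℂ) * u ^ (m+2-0)) = u ^ (m+3) := by
      simp [← pow_succ']
    rw [h0]
    have hrest : ∀ k ∈ range (m+1),
        u * (((m+1+(k+1)).choose (k+1) : ℂ) * u ^ (m+2-(k+1)))
        = ((m+1+k).choose k : ℂ) * u ^ (m+2-k)
          + ((m+1+k).choose (k+1) : ℂ) * u ^ (m+2-k) := by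
      intro k hk
      rw [mem_range] at hk
      have h1 : m+1+(k+1) = (m+1+k)+1 := by omega
      have h2 : (((m+1+k)+1).choose (k+1)) = (m+1+k).choose k + (m+1+k).choose (k+1) :=
        Nat.choose_succ_succ' _ _
      have h3 : m+2-k = (m+2-(k+1))+1 := by omega
      rw [h1, h2, h3, pow_succ]
      push_cast
      ring
    rw [Finset.sum_congr rfl hrest, Finset.sum_add_distrib]
  have hS1 : (∑ k ∈ range (m+2), ((m+1+k).choose k : ℂ) * u ^ (m+2-k))
      = X + ((2*m+2).choose (m+1) : ℂ) * u := by
    rw [Finset.sum_range_succ, show m+1+(m+1) = 2*m+2 by omega,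
      show m+2-(m+1) = 1 by omega, pow_one]
  have hSn : u^2 * (∑ k ∈ range (m+1), ((m+k).choose k : ℂ) * u ^ (m+1-k))
      = Y' + u^(m+3) := by
    rw [Finset.mul_sum, Finset.sum_range_succ']
    have h0 : u^2 * (((m+0).choose 0 : ℂ) * u ^ (m+1-0)) = u ^ (m+3) := by
      simp [← pow_add]
      ring
    rw [h0]
    have hrest : ∀ k ∈ range m,
        u^2 * (((m+(k+1)).choose (k+1) : ℂ) * u ^ (m+1-(k+1)))
        = ((m+1+k).choose (k+1) : ℂ) * u ^ (m+2-k) := by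
      intro k hk
      rw [mem_range] at hk
      have h1 : m+(k+1) = m+1+k := by omega
      have h3 : m+2-k = (m+1-(k+1))+2 := by omega
      rw [h1, h3, pow_add]
      ring
    rw [Finset.sum_congr rfl hrest]
  have hYY : Y = Y' + ((2*m+1).choose (m+1) : ℂ) * u^2 := by
    rw [hY, Finset.sum_range_succ, hY', show m+1+m = 2*m+1 by omega,
      show m+2-m = 2 by omega]
  have hc1 : (2*m+1).choose (m+1) = (2*m+1).choose m := by
    have := Nat.choose_symm (n := 2*m+1) (k := m+1) (by omega)
    rw [show 2*m+1-(m+1) = m by omega] at this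
    exact this.symm
  have hc2 : (2*m+2).choose (m+1) = 2 * ((2*m+1).choose m) := by
    have h : (2*m+2) = (2*m+1)+1 := by omega
    rw [h, Nat.choose_succ_succ' (2*m+1) m, hc1.symm]
    omega
  have expand : (u - 1) * (∑ k ∈ range (m+2), ((m+1+k).choose k : ℂ) * u ^ (m+2-k))
      = u * (∑ k ∈ range (m+2), ((m+1+k).choose k : ℂ) * u ^ (m+2-k))
        - (∑ k ∈ range (m+2), ((m+1+k).choose k : ℂ) * u ^ (m+2-k)) := by ring
  rw [expand, hT1, hSn, hS1, hYY, hc1, hc2]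
  push_cast
  ring

private lemma re_tau_aux_R (n : ℕ) (hn : 1 ≤ n) (w : ℂ) :
    (∑ k ∈ range (n+1), ((2*k).choose k : ℂ) * w ^ (n-k))
    = w * (∑ k ∈ range n, ((2*k).choose k : ℂ) * w ^ (n-1-k)) + ((2*n).choose n : ℂ) := by
  rw [Finset.sum_range_succ, Finset.mul_sum, Nat.sub_self, pow_zero, mul_one]
  congr 1
  refine Finset.sum_congr rfl fun k hk => ?_
  rw [mem_range] at hk
  rw [show n-k = (n-1-k)+1 by omega, pow_succ]
  ring

/-- The main identity: for `q` on the unit circle,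
`S_n - conj (S_n) = (q - conj q) * R_n` with `R_n` a positive combination. -/
private lemma re_tau_aux_main (q : ℂ) (hq : q * (starRingEnd ℂ) q = 1) :
    ∀ n : ℕ, 1 ≤ n →
    (∑ k ∈ range n, ((n-1+k).choose k : ℂ) * (1+q) ^ (n-k))
      - (starRingEnd ℂ) (∑ k ∈ range n, ((n-1+k).choose k : ℂ) * (1+q) ^ (n-k))
    = (q - (starRingEnd ℂ) q) *
       ∑ k ∈ range n, ((2*k).choose k : ℂ) * ((1+q) * (starRingEnd ℂ) (1+q)) ^ (n-1-k) := by
  intro n hn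
  induction n, hn using Nat.le_induction with
  | base =>
    simp [Complex.ext_iff]
  | succ n hn IH =>
    have IH' := IH
    -- abbreviations
    set S : ℂ := ∑ k ∈ range n, ((n-1+k).choose k : ℂ) * (1+q) ^ (n-k) with hS
    set S' : ℂ := (starRingEnd ℂ) S with hS'
    set R : ℂ := ∑ k ∈ range n, ((2*k).choose k : ℂ) * ((1+q) * (starRingEnd ℂ) (1+q)) ^ (n-1-k)
      with hR
    set q' : ℂ := (starRingEnd ℂ) q with hq'
    -- the sum at n+1
    set T : ℂ := ∑ k ∈ range (n+1), ((n+k).choose k : ℂ) * (1+q) ^ (n+1-k) with hT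
    have hTgoal : (∑ k ∈ range (n+1), ((n+1-1+k).choose k : ℂ) * (1+q) ^ (n+1-k)) = T := by
      rw [hT]
      refine Finset.sum_congr rfl fun k hk => by norm_num
    rw [hTgoal]
    -- key identity
    obtain ⟨m, rfl⟩ : ∃ m, n = m + 1 := ⟨n - 1, by omega⟩
    have key := re_tau_aux_key m (1+q)
    rw [add_sub_cancel_left] at key
    have hSkey : q * T = (1+q)^2 * S + ((2*(m+1)-1).choose (m+1-1) : ℂ) * (q^2 - 1) := by
      rw [hT, hS, show 2*(m+1)-1 = 2*m+1 by omega, show m+1-1 = m by omega]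
      calc q * ∑ k ∈ range (m+1+1), (((m+1+k).choose k : ℕ) : ℂ) * (1+q) ^ (m+1+1-k)
          = q * ∑ k ∈ range (m+2), (((m+1+k).choose k : ℕ) : ℂ) * (1+q) ^ (m+2-k) := rfl
        _ = (1+q)^2 * (∑ k ∈ range (m+1), ((m+k).choose k : ℂ) * (1+q) ^ (m+1-k))
            + ((2*m+1).choose m : ℂ) * (q^2-1) := by
            rw [← key]
        _ = _ := rfl
    -- express T via key, and conj T
    set c : ℂ := ((2*(m+1)-1).choose (m+1-1) : ℂ) with hc
    have hT' : T = q' * ((1+q)^2 * S + c*(q^2-1)) := by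
      have h0 : q' * (q * T) = T := by
        rw [← mul_assoc, mul_comm q' q, hq, one_mul]
      rw [← h0, hSkey]
    have hcT : (starRingEnd ℂ) T = q * ((1+q')^2 * S' + c*(q'^2-1)) := by
      rw [hT', hS', hq', hc]
      simp only [map_mul, map_add, map_pow, map_sub, map_one, Complex.conj_conj, map_natCast]
    have hR2 := re_tau_aux_R (m+1) (by omega) ((1+q) * (starRingEnd ℂ) (1+q))
    have hnat : (2*(m+1)).choose (m+1) = 2 * ((2*(m+1)-1).choose (m+1-1)) := by
      have h3 : (2*m+1).choose (m+1) = (2*m+1).choose m := by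
        have := Nat.choose_symm (n := 2*m+1) (k := m+1) (by omega)
        rw [show 2*m+1-(m+1) = m by omega] at this
        exact this.symm
      rw [show 2*(m+1) = (2*m+1)+1 by omega, Nat.choose_succ_succ' (2*m+1) m,
        show (2*m+1)+1-1 = 2*m+1 by omega, show m+1-1 = m by omega]
      omega
    have hc2 : (((2*(m+1)).choose (m+1) : ℕ) : ℂ) = 2 * c := by
      rw [hc, hnat]; push_cast; ring
    rw [show (m+1+1-1) = m+1 by omega] at *
    have hcu : (starRingEnd ℂ) (1+q) = 1 + q' := by rw [hq']; simp
    have hRR : R = ∑ k ∈ range (m+1), ((2*k).choose k : ℂ) * ((1+q)*(1+q'))^(m+1-1-k) := by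
      rw [hR, hcu]
    rw [hR2, hcT, hT', hc2, hcu]
    rw [hRR] at IH'
    linear_combination ((1+q)*(1+q')) * IH' + ((1+q)*S - (1+q')*S' + c*(q - q')) * hq

private lemma re_tau_aux_pos (n : ℕ) (hn : 1 ≤ n) (q : ℂ)
    (hq : q * (starRingEnd ℂ) q = 1) (hqim : 0 < q.im) :
    0 < (∑ k ∈ range n, ((n-1+k).choose k : ℂ) * (1+q) ^ (n-k)).im := by
  have hmain := re_tau_aux_main q hq n hn
  set S : ℂ := ∑ k ∈ range n, ((n-1+k).choose k : ℂ) * (1+q) ^ (n-k) with hS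
  set Rr : ℝ := ∑ k ∈ range n, ((2*k).choose k : ℝ) * (Complex.normSq (1+q)) ^ (n-1-k) with hRr
  have hRc : (∑ k ∈ range n, ((2*k).choose k : ℂ) *
      ((1+q) * (starRingEnd ℂ) (1+q)) ^ (n-1-k)) = ((Rr : ℝ) : ℂ) := by
    rw [hRr]
    push_cast [Complex.mul_conj]
    rfl
  rw [hRc] at hmain
  rw [Complex.sub_conj, Complex.sub_conj] at hmain
  have him : 2 * S.im = 2 * q.im * Rr := by
    have := congrArg Complex.im hmain
    simpa using this
  have hq1 : 1 + q ≠ 0 := by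
    intro h
    have : q = -1 := by linear_combination h
    rw [this] at hqim
    simp at hqim
  have hRrpos : 0 < Rr := by
    rw [hRr]
    apply Finset.sum_pos
    · intro k hk
      apply mul_pos
      · exact_mod_cast Nat.choose_pos (by omega)
      · exact pow_pos (Complex.normSq_pos.mpr hq1) _
    · exact ⟨0, Finset.mem_range.mpr (by omega)⟩
  nlinarith


open Metric
open scoped NNReal ENNReal

set_option maxHeartbeats 1000000 in
open Real in
theorem re_tau_neg (a0 : ℝ) (ha0 : 0 < a0) (n : ℕ) (hn : 1 ≤ n)
    (u1 : ℂ) (hIm : 0 < u1.im) (hRe : 0 < u1.re)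
    (v : ℂ → ℂ)
    (hv : ∀ z : ℂ, v z = (a0 : ℂ) * z * (z - u1) ^ n * (z - (starRingEnd ℂ) u1) ^ n)
    (ε : ℝ) (hε : 0 < ε) (hε' : ε < u1.im)
    (τ : ℂ)
    (hτ : τ = -(2 * π * Complex.I)
        * ((2 * π * Complex.I)⁻¹ * (∮ z in C(u1, ε), (v z)⁻¹))) :
    τ.re < 0 := by
  have hπ : 0 < π := Real.pi_pos
  have hu1 : u1 ≠ 0 := by
    intro h; rw [h] at hIm; simp at hIm
  set b : ℝ := u1.im with hbdef
  have hb0 : 0 < b := hIm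
  set w : ℂ := (starRingEnd ℂ) u1 with hw
  have hwne : w ≠ 0 := by
    rw [hw]; simpa using hu1
  set δ : ℂ := u1 - w with hδdef
  have hδ : δ = ((2*b : ℝ) : ℂ) * Complex.I := by
    rw [hδdef, hw]
    exact_mod_cast Complex.sub_conj u1
  have hδabs : ‖δ‖ = 2*b := by
    rw [hδ, norm_mul, Complex.norm_I, mul_one, Complex.norm_real, Real.norm_eq_abs]
    exact abs_of_pos (by positivity)
  have hδne : δ ≠ 0 := by
    intro h; rw [h] at hδabs; simp at hδabs; nlinarith
  have hu1abs : b < ‖u1‖ := by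
    have h1 : b^2 < ‖u1‖^2 := by
      rw [Complex.sq_norm, Complex.normSq_apply]
      nlinarith
    nlinarith [norm_nonneg u1]
  -- the coefficient sequences
  set m : ℕ := n - 1 with hmdef
  have hm : m + 1 = n := by omega
  set α : ℕ → ℂ := fun j => (-u1⁻¹)^j * u1⁻¹ with hα
  set β : ℕ → ℂ := fun k => ((k + m).choose m : ℂ) * (-δ⁻¹)^k * (δ⁻¹)^n with hβ
  set a : ℕ → ℂ := fun k => ((a0 : ℝ) : ℂ)⁻¹ * ∑ j ∈ range (k+1), α j * β (k - j) with ha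
  set g : ℂ → ℂ := fun z => (((a0 : ℝ) : ℂ) * z * (z - w)^n)⁻¹ with hg
  have ha0' : ((a0:ℝ):ℂ) ≠ 0 := by exact_mod_cast ha0.ne'
  -- HasSum of the power series
  have hnu1 : (0:ℝ) < ‖u1‖ := norm_pos_iff.mpr hu1
  have Hsum : ∀ y : ℂ, ‖y‖ < b → HasSum (fun k => a k * y^k) (g (u1+y)) := by
    intro y hy
    have hyu : ‖-y * u1⁻¹‖ < 1 := by
      rw [norm_mul, norm_neg, norm_inv, ← div_eq_mul_inv]
      exact (div_lt_one hnu1).mpr (hy.trans hu1abs)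
    have hyδ : ‖-y * δ⁻¹‖ < 1 := by
      rw [norm_mul, norm_neg, norm_inv, ← div_eq_mul_inv]
      refine (div_lt_one (by rw [hδabs]; positivity)).mpr ?_
      rw [hδabs]; linarith
    have huy : u1 + y ≠ 0 := by
      intro h
      have h2 : ‖y‖ = ‖u1‖ := by
        rw [show y = -u1 by linear_combination h, norm_neg]
      have := hy.trans hu1abs
      linarith
    have hδy : δ + y ≠ 0 := by
      intro h
      have h2 : ‖y‖ = 2*b := by
        rw [show y = -δ by linear_combination h, norm_neg, hδabs]
      linarith
    have heq1 : ∀ j, u1⁻¹ * (-y * u1⁻¹)^j = α j * y^j := by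
      intro j
      rw [hα, show (-y * u1⁻¹) = (-u1⁻¹) * y by ring, mul_pow]
      ring
    have H1 : HasSum (fun j => α j * y ^ j) ((u1 + y)⁻¹) := by
      have base := (hasSum_geometric_of_norm_lt_one hyu).mul_left u1⁻¹
      rw [funext heq1] at base
      have hval : u1⁻¹ * (1 - -y * u1⁻¹)⁻¹ = (u1+y)⁻¹ := by
        have h2 : (1 : ℂ) - -y * u1⁻¹ = (u1+y) * u1⁻¹ := by field_simp; ring
        rw [h2, mul_inv, inv_inv]
        field_simp
      rwa [hval] at base
    have heq2 : ∀ k, (δ⁻¹)^n * (((k+m).choose m : ℂ) * (-y * δ⁻¹)^k) = β k * y^k := by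
      intro k
      rw [hβ, show (-y * δ⁻¹) = (-δ⁻¹) * y by ring, mul_pow]
      ring
    have H2 : HasSum (fun k => β k * y^k) (((δ + y)^n)⁻¹) := by
      have base := (hasSum_choose_mul_geometric_of_norm_lt_one m hyδ).mul_left ((δ⁻¹)^n)
      rw [funext heq2] at base
      have hval : (δ⁻¹)^n * (1 / (1 - -y * δ⁻¹)^(m+1)) = ((δ+y)^n)⁻¹ := by
        rw [hm]
        have h2 : (1 : ℂ) - -y * δ⁻¹ = (δ+y) * δ⁻¹ := by field_simp; ring
        rw [h2]
        field_simp
        rw [div_pow, div_pow, one_pow]; ring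
      rwa [hval] at base
    have hαs : Summable (fun j => ‖α j * y^j‖) := by
      have base := (summable_geometric_of_lt_one (norm_nonneg (-y * u1⁻¹)) hyu).mul_left ‖u1⁻¹‖
      refine base.congr fun j => ?_
      rw [← heq1 j]
      simp [norm_mul, norm_pow]
      try ring
    have hβs : Summable (fun k => ‖β k * y^k‖) := by
      have hr : ‖(‖-y * δ⁻¹‖ : ℝ)‖ < 1 := by
        rwa [Real.norm_eq_abs, abs_of_nonneg (norm_nonneg _)]
      have base := (summable_choose_mul_geometric_of_norm_lt_one (R := ℝ) m hr).mul_left ‖(δ⁻¹)^n‖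
      refine base.congr fun k => ?_
      rw [← heq2 k]
      simp [norm_mul, norm_pow, Complex.norm_natCast, Real.norm_natCast]
      try ring
    have prod := hasSum_sum_range_mul_of_summable_norm hαs hβs
    rw [H1.tsum_eq, H2.tsum_eq] at prod
    have final := prod.mul_left (((a0:ℝ):ℂ))⁻¹
    have hterm : ∀ k, (((a0:ℝ):ℂ))⁻¹ * ∑ j ∈ range (k+1), (α j * y^j) * (β (k-j) * y^(k-j))
        = a k * y^k := by
      intro k
      rw [ha]
      have h3 : ∑ j ∈ range (k+1), (α j * y^j) * (β (k-j) * y^(k-j))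
          = (∑ j ∈ range (k+1), α j * β (k-j)) * y^k := by
        rw [Finset.sum_mul]
        refine Finset.sum_congr rfl fun j hj => ?_
        rw [mem_range] at hj
        have h4 : y^j * y^(k-j) = y^k := by
          rw [← pow_add]
          congr 1
          omega
        calc (α j * y^j) * (β (k-j) * y^(k-j)) = α j * β (k-j) * (y^j * y^(k-j)) := by ring
          _ = α j * β (k-j) * y^k := by rw [h4]
      rw [h3]
      ring
    have hval : (((a0:ℝ):ℂ))⁻¹ * ((u1+y)⁻¹ * ((δ+y)^n)⁻¹) = g (u1+y) := by
      rw [hg]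
      have h5 : u1 + y - w = δ + y := by rw [hδdef]; ring
      simp only [h5]
      rw [mul_inv, mul_inv]
      ring
    rw [funext hterm, hval] at final
    exact final
  -- summability for the radius bound
  have Hrad : Summable fun k => ‖a k‖ * b ^ k := by
    set F : ℕ → ℝ := fun j => ‖α j‖ * b^j with hF
    set G : ℕ → ℝ := fun k => ‖β k‖ * b^k with hG
    have hFs : Summable fun j => ‖F j‖ := by
      have hρ : ‖u1⁻¹‖ * b < 1 := by
        have h0 := (div_lt_one hnu1).mpr hu1abs
        rw [div_eq_mul_inv] at h0
        rw [norm_inv, mul_comm]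
        exact h0
      have base := (summable_geometric_of_lt_one (by positivity) hρ).mul_left ‖u1⁻¹‖
      refine base.congr fun j => ?_
      rw [hF]
      simp only [Real.norm_eq_abs]
      rw [abs_of_nonneg (by positivity)]
      simp [hα, norm_mul, norm_pow, mul_pow]
      try ring
    have hGs : Summable fun k => ‖G k‖ := by
      have h2 : ‖(‖δ⁻¹‖ * b : ℝ)‖ < 1 := by
        rw [norm_inv, hδabs, Real.norm_eq_abs, abs_of_nonneg (by positivity)]
        rw [show (2*b)⁻¹ * b = 2⁻¹ by rw [mul_comm 2 b]; field_simp]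
        norm_num
      have base := (summable_choose_mul_geometric_of_norm_lt_one (R := ℝ) m h2).mul_left ‖(δ⁻¹)^n‖
      refine base.congr fun k => ?_
      rw [hG]
      simp only [Real.norm_eq_abs]
      rw [abs_of_nonneg (by positivity)]
      simp [hβ, norm_mul, norm_pow, mul_pow, Complex.norm_natCast]
      try ring
    have hmaj := summable_norm_sum_mul_range_of_summable_norm hFs hGs
    apply Summable.of_nonneg_of_le (fun k => by positivity) ?_
      (hmaj.mul_left ‖(((a0:ℝ):ℂ))⁻¹‖)
    intro k
    have h1 : ‖a k‖ ≤ ‖(((a0:ℝ):ℂ))⁻¹‖ * ∑ j ∈ range (k+1), ‖α j * β (k-j)‖ := by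
      rw [ha]
      rw [norm_mul]
      exact mul_le_mul_of_nonneg_left (norm_sum_le _ _) (norm_nonneg _)
    have h2 : (∑ j ∈ range (k+1), ‖α j * β (k-j)‖) * b^k
        = ∑ j ∈ range (k+1), F j * G (k-j) := by
      rw [Finset.sum_mul]
      refine Finset.sum_congr rfl fun j hj => ?_
      rw [mem_range] at hj
      rw [hF, hG, norm_mul]
      have h4 : b^j * b^(k-j) = b^k := by
        rw [← pow_add]
        congr 1
        omega
      calc ‖α j‖ * ‖β (k-j)‖ * b^k = ‖α j‖ * ‖β (k-j)‖ * (b^j * b^(k-j)) := by rw [h4]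
        _ = ‖α j‖ * b^j * (‖β (k-j)‖ * b^(k-j)) := by ring
    calc ‖a k‖ * b^k
        ≤ (‖(((a0:ℝ):ℂ))⁻¹‖ * ∑ j ∈ range (k+1), ‖α j * β (k-j)‖) * b^k :=
          mul_le_mul_of_nonneg_right h1 (by positivity)
      _ = ‖(((a0:ℝ):ℂ))⁻¹‖ * ∑ j ∈ range (k+1), F j * G (k-j) := by
          rw [mul_assoc, h2]
      _ ≤ ‖(((a0:ℝ):ℂ))⁻¹‖ * ‖∑ j ∈ range (k+1), F j * G (k-j)‖ := by
          apply mul_le_mul_of_nonneg_left _ (norm_nonneg _)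
          rw [Real.norm_eq_abs]
          exact le_abs_self _
  -- power series on ball
  set p : FormalMultilinearSeries ℂ ℂ ℂ := FormalMultilinearSeries.ofScalars ℂ a with hp
  have hps : HasFPowerSeriesOnBall g p u1 (ENNReal.ofReal b) := by
    constructor
    · rw [show ENNReal.ofReal b = ((b.toNNReal : ℝ≥0) : ℝ≥0∞) from rfl]
      apply p.le_radius_of_summable (r := b.toNNReal)
      have hco : ((b.toNNReal : ℝ≥0) : ℝ) = b := Real.coe_toNNReal _ hb0.le
      rw [hco]
      simpa only [hp, FormalMultilinearSeries.ofScalars_norm] using Hrad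
    · exact ENNReal.ofReal_pos.mpr hb0
    · intro y hy
      rw [mem_emetric_ball_zero_iff] at hy
      have hyb : ‖y‖ < b := by
        rw [show ENNReal.ofReal b = ((b.toNNReal : ℝ≥0) : ℝ≥0∞) from rfl,
          enorm_eq_nnnorm, ENNReal.coe_lt_coe] at hy
        have h2 : (‖y‖₊ : ℝ) < (b.toNNReal : ℝ) := NNReal.coe_lt_coe.mpr hy
        simpa [Real.coe_toNNReal _ hb0.le, coe_nnnorm] using h2
      have := Hsum y hyb
      convert this using 2 with k
      · rfl
      rw [hp, FormalMultilinearSeries.ofScalars_apply_eq, smul_eq_mul]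
  -- differentiability of g on the closed ball of radius ε
  have hdiff : DifferentiableOn ℂ g (closedBall u1 ε) := by
    intro z hz
    rw [mem_closedBall, dist_eq_norm] at hz
    have hzu : ‖u1‖ ≤ ‖z‖ + ε := by
      calc ‖u1‖ = ‖z - (z - u1)‖ := by ring_nf
        _ ≤ ‖z‖ + ‖z - u1‖ := norm_sub_le _ _
        _ ≤ ‖z‖ + ε := by linarith
    have hz0 : z ≠ 0 := by
      intro h
      rw [h, norm_zero] at hzu
      linarith
    have hzw : z ≠ w := by
      intro h
      have h2 : ‖z - u1‖ = 2*b := by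
        rw [h, ← norm_neg, show -(w - u1) = δ by rw [hδdef]; ring, hδabs]
      linarith
    have hne : ((a0:ℝ):ℂ) * z * (z-w)^n ≠ 0 :=
      mul_ne_zero (mul_ne_zero ha0' hz0) (pow_ne_zero _ (sub_ne_zero.mpr hzw))
    have hda : DifferentiableAt ℂ (fun z : ℂ => ((a0:ℝ):ℂ) * z * (z-w)^n) z := by
      apply DifferentiableAt.mul
      · exact (differentiableAt_const _).mul differentiableAt_id
      · exact (differentiableAt_id.sub_const _).pow _
    exact (hda.inv hne).differentiableWithinAt
  -- the Cauchy power series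
  set εn : ℝ≥0 := ⟨ε, hε.le⟩ with hεn
  have hεpos : 0 < εn := by
    rw [← NNReal.coe_pos]
    exact hε
  have hC : HasFPowerSeriesOnBall g (cauchyPowerSeries g u1 εn) u1 εn :=
    DifferentiableOn.hasFPowerSeriesOnBall hdiff hεpos
  have huniq : p = cauchyPowerSeries g u1 εn :=
    hps.hasFPowerSeriesAt.eq_formalMultilinearSeries hC.hasFPowerSeriesAt
  have happ : a m = (2*(π:ℝ)*Complex.I : ℂ)⁻¹
      • ∮ z in C(u1, ε), ((1:ℂ) / (z - u1))^m • ((z - u1)⁻¹ • g z) := by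
    have h0 := congrArg (fun P : FormalMultilinearSeries ℂ ℂ ℂ => P m (fun _ => (1:ℂ))) huniq
    simp only [hp] at h0
    rw [FormalMultilinearSeries.ofScalars_apply_eq, one_pow, smul_eq_mul, mul_one] at h0
    rw [cauchyPowerSeries_apply] at h0
    exact h0
  -- the integrand matches (v z)⁻¹ on the circle
  have hint : (∮ z in C(u1, ε), ((1:ℂ) / (z - u1))^m • ((z - u1)⁻¹ • g z))
      = ∮ z in C(u1, ε), (v z)⁻¹ := by
    apply circleIntegral.integral_congr hε.le
    intro z hz
    rw [mem_sphere, dist_eq_norm] at hz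
    have hz1 : z ≠ u1 := by
      intro h
      rw [h, sub_self, norm_zero] at hz
      linarith
    have hzu : ‖u1‖ ≤ ‖z‖ + ε := by
      calc ‖u1‖ = ‖z - (z - u1)‖ := by ring_nf
        _ ≤ ‖z‖ + ‖z - u1‖ := norm_sub_le _ _
        _ = ‖z‖ + ε := by rw [hz]
    have hz0 : z ≠ 0 := by
      intro h
      rw [h, norm_zero] at hzu
      linarith
    have hzw : z ≠ w := by
      intro h
      have h2 : ‖z - u1‖ = 2*b := by
        rw [h, ← norm_neg, show -(w - u1) = δ by rw [hδdef]; ring, hδabs]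
      linarith
    show ((1:ℂ) / (z - u1))^m • ((z - u1)⁻¹ • g z) = (v z)⁻¹
    rw [hv z, hg, smul_eq_mul, smul_eq_mul, one_div, inv_pow]
    have hzu1 : z - u1 ≠ 0 := sub_ne_zero.mpr hz1
    have hzw' : z - w ≠ 0 := sub_ne_zero.mpr hzw
    rw [show ((a0:ℝ):ℂ) * z * (z - u1)^n * (z - w)^n
        = ((z-u1)^m * (z - u1)) * (((a0:ℝ):ℂ) * z * (z - w)^n) by
      rw [← pow_succ, hm]; ring]
    rw [mul_inv, mul_inv]
    ring
  -- τ in terms of the coefficient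
  have hτ2 : τ = -(2*(π:ℝ)*Complex.I : ℂ) * a m := by
    rw [hτ, happ, hint, smul_eq_mul]
  -- now compute a m explicitly
  set q : ℂ := -(w * u1⁻¹) with hqdef
  set u : ℂ := δ * u1⁻¹ with hudef
  have hu : u = 1 + q := by
    rw [hudef, hδdef, hqdef]
    field_simp
    ring
  have hδ2n : δ^(2*n) = (((2*b)^(2*n) : ℝ) : ℂ) * (-1)^n := by
    rw [hδ, mul_pow, show Complex.I^(2*n) = ((-1:ℂ))^n by rw [pow_mul, Complex.I_sq]]
    push_cast
    ring
  have hterm : ∀ k ∈ range n, α (m - k) * β k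
      = -(((2*b)^(2*n) : ℝ) : ℂ)⁻¹ * ((((n-1+k).choose k : ℕ) : ℂ) * u^(n-k)) := by
    intro k hk
    rw [mem_range] at hk
    have hch : (((k+m).choose m : ℕ) : ℂ) = (((n-1+k).choose k : ℕ) : ℂ) := by
      norm_cast
      rw [show n-1+k = k+m by omega]
      have h5 := Nat.choose_symm (show k ≤ k+m by omega)
      rw [show k+m-k = m by omega] at h5
      exact h5
    have hsplit : u^(n-k) = δ^(n-k) * (u1⁻¹)^(n-k) := by rw [hudef, mul_pow]
    have hpow1 : α (m-k) = (-1:ℂ)^(m-k) * (u1⁻¹)^(n-k) := by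
      simp only [hα]
      rw [neg_pow, show n-k = (m-k)+1 by omega, pow_succ]
      ring
    have hpow2 : β k = (((k+m).choose m : ℕ) : ℂ) * ((-1:ℂ)^k * (δ⁻¹)^(k+n)) := by
      simp only [hβ]
      rw [neg_pow, pow_add, inv_pow, inv_pow]
      ring
    have hKne : (((2*b)^(2*n) : ℝ) : ℂ) ≠ 0 := by
      have h6 : (0:ℝ) < (2*b)^(2*n) := by positivity
      exact_mod_cast h6.ne'
    have hδkn : δ^(k+n) ≠ 0 := pow_ne_zero _ hδne
    have h7 : δ^(n-k) * δ^(k+n) = (((2*b)^(2*n) : ℝ) : ℂ) * (-1)^n := by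
      rw [← pow_add, show n-k+(k+n) = 2*n by omega, hδ2n]
    have h8 : ((-1:ℂ))^(m-k) * (-1)^k = (-1)^m := by
      rw [← pow_add, show m-k+k = m by omega]
    have h9 : ((-1:ℂ))^n = -((-1:ℂ))^m := by
      rw [← hm, pow_succ]
      ring
    have hmain : ((-1:ℂ))^(m-k) * ((-1:ℂ))^k * (δ⁻¹)^(k+n)
        = -(((2*b)^(2*n) : ℝ) : ℂ)⁻¹ * δ^(n-k) := by
      rw [h8, inv_pow]
      apply mul_right_cancel₀ hδkn
      rw [mul_assoc, inv_mul_cancel₀ hδkn, mul_one, mul_assoc, h7, h9]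
      rw [show -(((2*b)^(2*n):ℝ):ℂ)⁻¹ * ((((2*b)^(2*n):ℝ):ℂ) * -((-1:ℂ))^m)
          = (((2*b)^(2*n):ℝ):ℂ)⁻¹ * (((2*b)^(2*n):ℝ):ℂ) * ((-1:ℂ))^m by ring,
        inv_mul_cancel₀ hKne, one_mul]
    calc α (m-k) * β k
        = (((k+m).choose m : ℕ) : ℂ) * (((-1:ℂ))^(m-k) * ((-1:ℂ))^k * (δ⁻¹)^(k+n))
            * (u1⁻¹)^(n-k) := by
          rw [hpow1, hpow2]; ring
      _ = (((k+m).choose m : ℕ) : ℂ) * (-(((2*b)^(2*n) : ℝ) : ℂ)⁻¹ * δ^(n-k))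
            * (u1⁻¹)^(n-k) := by rw [hmain]
      _ = -(((2*b)^(2*n) : ℝ) : ℂ)⁻¹ * ((((n-1+k).choose k : ℕ) : ℂ) * u^(n-k)) := by
          rw [hch, hsplit]; ring
  have hreflect : ∑ j ∈ range (m+1), α j * β (m - j) = ∑ k ∈ range n, α (m-k) * β k := by
    rw [hm]
    have h0 := Finset.sum_range_reflect (fun j => α j * β (m - j)) n
    rw [← h0]
    refine Finset.sum_congr rfl fun j hj => ?_
    rw [mem_range] at hj
    congr 2 <;> omega
  set Sc : ℂ := ∑ k ∈ range n, (((n-1+k).choose k : ℕ) : ℂ) * u^(n-k) with hSc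
  have ham : a m = ((-(a0 * (2*b)^(2*n))⁻¹ : ℝ) : ℂ) * Sc := by
    simp only [ha]
    rw [hreflect, Finset.sum_congr rfl hterm, ← Finset.mul_sum, hSc]
    push_cast
    ring
  -- positivity input
  have hqq : q * (starRingEnd ℂ) q = 1 := by
    rw [hqdef, hw]
    simp only [map_neg, map_mul, map_inv₀, Complex.conj_conj]
    field_simp
    exact div_self hwne
  have hns : 0 < Complex.normSq u1 := Complex.normSq_pos.mpr hu1
  have hqim : 0 < q.im := by
    have h0 : q.im = 2*u1.re*u1.im / Complex.normSq u1 := by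
      rw [hqdef, hw]
      simp [Complex.mul_im, Complex.inv_re, Complex.inv_im, Complex.conj_re, Complex.conj_im]
      field_simp
      ring
    rw [h0]
    apply div_pos _ hns
    exact mul_pos (mul_pos two_pos hRe) hIm
  have Spos : 0 < Sc.im := by
    have h0 := re_tau_aux_pos n hn q hqq hqim
    rw [hSc, hu]
    exact h0
  -- conclusion
  have him : (a m).im = -(a0 * (2*b)^(2*n))⁻¹ * Sc.im := by
    rw [ham, Complex.mul_im, Complex.ofReal_re, Complex.ofReal_im, zero_mul, add_zero]
  have hre : τ.re = 2*π*(a m).im := by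
    rw [hτ2]
    simp [Complex.mul_re, Complex.mul_im]
    try ring
  rw [hre, him]
  have hcpos : 0 < (a0 * (2*b)^(2*n))⁻¹ := by positivity
  have h2 : 0 < 2*π := by linarith
  nlinarith [mul_pos h2 (mul_pos hcpos Spos)]
end
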